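/- Let n > 1 and d > 1 be integers. Set X := {j·d : 0 ≤ j ≤ n}, m := (4n+1)·d + 1, Y := m − X, Z := the integer interval (2nd, (2n+1)d] = {x ∈ ℤ : 2nd < x ≤ (2n+1)d}, and A := X ∪ Y ∪ Z ∪ {2nd}. Then A is a normalised MSTD set with |A+A| = |A−A| + 1. -/
import Mathlib

open Finset Pointwise

/-- A finite set of integers is normalised if its smallest element is `0` and
the gcd of its elements is `1`. -/
def IsNormalised (A : Finset ℤ) : Prop :=
  0 ∈ A ∧ (∀ a ∈ A, 0 ≤ a) ∧ A.gcd id = 1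

/-- Membership predicate describing the set `A`. -/
def memP (n d m a : ℤ) : Prop :=
  (∃ j, 0 ≤ j ∧ j ≤ n ∧ j * d = a) ∨ (∃ j, 0 ≤ j ∧ j ≤ n ∧ m - j * d = a) ∨
  (2 * n * d < a ∧ a ≤ (2 * n + 1) * d) ∨ a = 2 * n * d

lemma pos_low {t d s : ℤ} (ht : 1 ≤ t) (hd : 1 < d) (hle : t * d ≤ s) (hs : s < d) : False := by
  nlinarith

lemma neg_low {t d s : ℤ} (ht : t ≤ -1) (hd : 0 < d) (hle : s ≤ t * d) (hs : 0 ≤ s) : False := by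
  nlinarith

lemma eq_one_contra {t d : ℤ} (hd : 1 < d) (h : t * d = 1) : False := by
  have h3 : t ≤ -1 ∨ t = 0 ∨ 1 ≤ t := by omega
  rcases h3 with h3 | h3 | h3
  · exact neg_low h3 (by omega) h.ge (by norm_num)
  · subst h3; simp at h
  · exact pos_low h3 hd h.le hd

lemma key0 {n d m a b : ℤ} (hn : 1 < n) (hd : 1 < d) (hm : m = (4 * n + 1) * d + 1)
    (ha : memP n d m a) (hb : memP n d m b) : b - a ≠ d + 1 := by
  subst hm
  intro heq
  rcases ha with ⟨j, hj0, hjn, rfl⟩ | ⟨j, hj0, hjn, rfl⟩ | ⟨ha1, ha2⟩ | rfl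
  · -- a ∈ X
    rcases hb with ⟨k, hk0, hkn, rfl⟩ | ⟨k, hk0, hkn, rfl⟩ | ⟨hb1, hb2⟩ | rfl
    · exact eq_one_contra (t := k - j - 1) hd (by linear_combination heq)
    · have h1 : (4 * n - j - k) * d = 0 := by linear_combination heq
      exact pos_low (by omega) hd h1.le (by omega)
    · have hb1' : 2 * n * d + 1 ≤ b := Int.add_one_le_iff.mpr hb1
      have h1 : (2 * n - j - 1) * d ≤ 0 := by nlinarith
      exact pos_low (by omega) hd h1 (by omega)
    · have h1 : (2 * n - j - 1) * d = 1 := by linear_combination heq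
      exact pos_low (by omega) hd h1.le hd
  · -- a ∈ Y
    rcases hb with ⟨k, hk0, hkn, rfl⟩ | ⟨k, hk0, hkn, rfl⟩ | ⟨hb1, hb2⟩ | rfl
    · have h1 : (k + j - 4 * n - 2) * d = 2 := by linear_combination heq
      exact neg_low (by omega) (by omega) h1.ge (by norm_num)
    · exact eq_one_contra (t := j - k - 1) hd (by linear_combination heq)
    · have h1 : (2 * n + 1 - j) * d ≤ -2 := by nlinarith
      exact pos_low (by omega) hd h1 (by omega)
    · have h1 : (j - 2 * n - 2) * d = 2 := by linear_combination heq
      exact neg_low (by omega) (by omega) h1.ge (by norm_num)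
  · -- a ∈ Z
    rcases hb with ⟨k, hk0, hkn, rfl⟩ | ⟨k, hk0, hkn, rfl⟩ | ⟨hb1, hb2⟩ | rfl
    · have ha1' : 2 * n * d + 1 ≤ a := Int.add_one_le_iff.mpr ha1
      have h1 : 2 ≤ (k - 2 * n - 1) * d := by nlinarith
      exact neg_low (by omega) (by omega) h1 (by norm_num)
    · have h1 : (2 * n - 1 - k) * d ≤ 0 := by nlinarith
      exact pos_low (by omega) hd h1 (by omega)
    · nlinarith
    · nlinarith
  · -- a = 2nd
    rcases hb with ⟨k, hk0, hkn, rfl⟩ | ⟨k, hk0, hkn, rfl⟩ | ⟨hb1, hb2⟩ | rfl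
    · have h1 : 1 ≤ (k - 2 * n - 1) * d := by nlinarith
      exact neg_low (by omega) (by omega) h1 (by norm_num)
    · have h1 : (2 * n - k) * d = 0 := by linear_combination heq
      exact pos_low (by omega) hd h1.le (by omega)
    · nlinarith
    · nlinarith

lemma memP_sym {n d m a : ℤ} (hn : 1 < n) (hd : 1 < d) (hm : m = (4 * n + 1) * d + 1)
    (ha : memP n d m a) (hne : a ≠ 2 * n * d) : memP n d m (m - a) := by
  rcases ha with ⟨j, hj0, hjn, rfl⟩ | ⟨j, hj0, hjn, rfl⟩ | ⟨ha1, ha2⟩ | rfl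
  · exact Or.inr (Or.inl ⟨j, hj0, hjn, rfl⟩)
  · exact Or.inl ⟨j, hj0, hjn, by ring⟩
  · subst hm
    have ha1' : 2 * n * d + 1 ≤ a := Int.add_one_le_iff.mpr ha1
    refine Or.inr (Or.inr (Or.inl ⟨by nlinarith, by nlinarith⟩))
  · exact absurd rfl hne

lemma construct {n d m a : ℤ} (hn : 1 < n) (hd : 1 < d) (hm : m = (4 * n + 1) * d + 1)
    (ha : memP n d m a) (hne : a ≠ 2 * n * d) :
    ∃ b1 b2, memP n d m b1 ∧ memP n d m b2 ∧ b2 ≠ 2 * n * d ∧ a - 2 * n * d = b1 - b2 := by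
  subst hm
  rcases ha with ⟨j, hj0, hjn, rfl⟩ | ⟨j, hj0, hjn, rfl⟩ | ⟨ha1, ha2⟩ | rfl
  · by_cases hj : j = n
    · refine ⟨(4 * n + 1) * d + 1 - n * d, (4 * n + 1) * d + 1,
        Or.inr (Or.inl ⟨n, by omega, le_refl n, rfl⟩),
        Or.inr (Or.inl ⟨0, le_refl 0, by omega, by ring⟩), ?_, by rw [hj]; ring⟩
      intro h
      have h1 : (2 * n + 1) * d ≤ -1 := by linarith
      exact pos_low (by omega) hd h1 (by omega)
    · refine ⟨(j + 1) * d, (2 * n + 1) * d,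
        Or.inl ⟨j + 1, by omega, by omega, rfl⟩,
        Or.inr (Or.inr (Or.inl ⟨by nlinarith, le_refl _⟩)), ?_, by ring⟩
      intro h
      have h1 : (1 : ℤ) * d ≤ 0 := by linarith
      exact pos_low (by omega) hd h1 (by omega)
  · by_cases hj : j = 0
    · subst hj
      refine ⟨(4 * n + 1) * d + 1 - n * d, n * d,
        Or.inr (Or.inl ⟨n, by omega, le_refl n, rfl⟩),
        Or.inl ⟨n, by omega, le_refl n, rfl⟩, ?_, by ring⟩
      intro h
      have h1 : n * d ≤ 0 := by linarith
      exact pos_low (show (1:ℤ) ≤ n by omega) hd h1 (by omega)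
    · refine ⟨2 * n * d + 1, (j - 1) * d,
        Or.inr (Or.inr (Or.inl ⟨by omega, by nlinarith⟩)),
        Or.inl ⟨j - 1, by omega, by omega, rfl⟩, ?_, by ring⟩
      intro h
      have h1 : (2 * n - j + 1) * d ≤ 0 := by nlinarith
      exact pos_low (by omega) hd h1 (by omega)
  · by_cases hc : a = (2 * n + 1) * d
    · refine ⟨1 * d, 0 * d,
        Or.inl ⟨1, by omega, by omega, rfl⟩,
        Or.inl ⟨0, le_refl 0, by omega, rfl⟩, ?_, by linear_combination hc⟩
      intro h
      have h1 : 2 * n * d ≤ 0 := by linarith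
      exact pos_low (show (1:ℤ) ≤ 2 * n by omega) hd h1 (by omega)
    · have ha2' : a < (2 * n + 1) * d := lt_of_le_of_ne ha2 hc
      have hb2l : 2 * n * d < (4 * n + 1) * d - a := by nlinarith
      refine ⟨(2 * n + 1) * d, (4 * n + 1) * d - a,
        Or.inr (Or.inr (Or.inl ⟨by nlinarith, le_refl _⟩)),
        Or.inr (Or.inr (Or.inl ⟨hb2l, by nlinarith⟩)), ne_of_gt hb2l, by ring⟩
  · exact absurd rfl hne

/-- Theorem 4: for `n, d > 1`, the set `A = X ∪ (m − X) ∪ Z ∪ {2nd}` is a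
normalised MSTD set with `|A+A| = |A−A| + 1`. -/
theorem thm4 (n d : ℤ) (hn : 1 < n) (hd : 1 < d)
    (X Y Z A : Finset ℤ) (m : ℤ)
    (hX : X = (Finset.Icc 0 n).image (fun j => j * d))
    (hm : m = (4 * n + 1) * d + 1)
    (hY : Y = X.image (fun x => m - x))
    (hZ : Z = Finset.Ioc (2 * n * d) ((2 * n + 1) * d))
    (hA : A = X ∪ Y ∪ Z ∪ {2 * n * d}) :
    IsNormalised A ∧ (A + A).card = (A - A).card + 1 := by
  have hmem : ∀ a : ℤ, a ∈ A ↔ memP n d m a := by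
    intro a
    subst hX hY hZ hA
    constructor
    · intro h
      simp only [Finset.mem_union, Finset.mem_image, Finset.mem_Icc,
        Finset.mem_Ioc, Finset.mem_singleton] at h
      rcases h with ((⟨j, ⟨h1, h2⟩, h3⟩ | ⟨x, ⟨j, ⟨h1, h2⟩, h3⟩, h4⟩) | h) | h
      · exact Or.inl ⟨j, h1, h2, h3⟩
      · exact Or.inr (Or.inl ⟨j, h1, h2, by rw [h3]; exact h4⟩)
      · exact Or.inr (Or.inr (Or.inl h))
      · exact Or.inr (Or.inr (Or.inr h))
    · intro h
      simp only [Finset.mem_union, Finset.mem_image, Finset.mem_Icc,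
        Finset.mem_Ioc, Finset.mem_singleton]
      rcases h with ⟨j, h1, h2, h3⟩ | ⟨j, h1, h2, h3⟩ | h | h
      · exact Or.inl (Or.inl (Or.inl ⟨j, ⟨h1, h2⟩, h3⟩))
      · exact Or.inl (Or.inl (Or.inr ⟨j * d, ⟨j, ⟨h1, h2⟩, rfl⟩, h3⟩))
      · exact Or.inl (Or.inr h)
      · exact Or.inr h
  have h0A : (0 : ℤ) ∈ A := (hmem 0).mpr (Or.inl ⟨0, le_refl 0, by omega, by ring⟩)
  have hdA : d ∈ A := (hmem d).mpr (Or.inl ⟨1, by omega, by omega, by ring⟩)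
  have hmA : m ∈ A := (hmem m).mpr (Or.inr (Or.inl ⟨0, le_refl 0, by omega, by ring⟩))
  have hcA : (2 * n * d) ∈ A := (hmem _).mpr (Or.inr (Or.inr (Or.inr rfl)))
  have hsym : ∀ a ∈ A, a ≠ 2 * n * d → m - a ∈ A := fun a ha h =>
    (hmem _).mpr (memP_sym hn hd hm ((hmem a).mp ha) h)
  have hkey : ∀ a ∈ A, ∀ b ∈ A, b - a ≠ d + 1 := fun a ha b hb =>
    key0 hn hd hm ((hmem a).mp ha) ((hmem b).mp hb)
  have hsum : A + A = (A - A).image (fun x => m + x) ∪ {2 * n * d + 2 * n * d} := by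
    ext x
    simp only [Finset.mem_union, Finset.mem_image, Finset.mem_singleton]
    rw [Finset.mem_add]
    constructor
    · rintro ⟨a, ha, b, hb, rfl⟩
      by_cases hbc : b = 2 * n * d
      · subst hbc
        by_cases hac : a = 2 * n * d
        · subst hac; right; rfl
        · left
          refine ⟨2 * n * d - (m - a), ?_, by ring⟩
          rw [Finset.mem_sub]
          exact ⟨2 * n * d, hcA, m - a, hsym a ha hac, rfl⟩
      · left
        refine ⟨a - (m - b), ?_, by ring⟩
        rw [Finset.mem_sub]
        exact ⟨a, ha, m - b, hsym b hb hbc, rfl⟩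
    · rintro (⟨y, hy, rfl⟩ | rfl)
      · rw [Finset.mem_sub] at hy
        obtain ⟨a, ha, b, hb, rfl⟩ := hy
        by_cases hbc : b = 2 * n * d
        · subst hbc
          by_cases hac : a = 2 * n * d
          · subst hac; exact ⟨0, h0A, m, hmA, by ring⟩
          · obtain ⟨b1, b2, hb1, hb2, hb2ne, heq⟩ :=
              construct hn hd hm ((hmem a).mp ha) hac
            exact ⟨b1, (hmem _).mpr hb1, m - b2, hsym b2 ((hmem _).mpr hb2) hb2ne,
              by linear_combination -heq⟩
        · exact ⟨a, ha, m - b, hsym b hb hbc, by ring⟩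
      · exact ⟨2 * n * d, hcA, 2 * n * d, hcA, rfl⟩
  have hnotin : 2 * n * d + 2 * n * d ∉ (A - A).image (fun x => m + x) := by
    simp only [Finset.mem_image]
    rintro ⟨y, hy, heq⟩
    rw [Finset.mem_sub] at hy
    obtain ⟨a, ha, b, hb, rfl⟩ := hy
    refine hkey a ha b hb ?_
    rw [hm] at heq
    linarith
  have hcard : (A + A).card = (A - A).card + 1 := by
    rw [hsum, Finset.card_union_of_disjoint (Finset.disjoint_singleton_right.mpr hnotin),
      Finset.card_image_of_injective _ (add_right_injective m), Finset.card_singleton]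
  refine ⟨⟨h0A, ?_, ?_⟩, hcard⟩
  · intro a ha
    have hd0 : (0 : ℤ) ≤ d := by omega
    have hn0 : (0 : ℤ) ≤ n := by omega
    have hnd : 0 ≤ n * d := mul_nonneg hn0 hd0
    rcases (hmem a).mp ha with ⟨j, h1, h2, h3⟩ | ⟨j, h1, h2, h3⟩ | h | h
    · rw [← h3]; exact mul_nonneg h1 hd0
    · have hjd : j * d ≤ n * d := mul_le_mul_of_nonneg_right h2 hd0
      rw [← h3, hm]; nlinarith
    · nlinarith [h.1]
    · rw [h]; nlinarith
  · have hg1 : A.gcd id ∣ d := Finset.gcd_dvd hdA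
    have hg2 : A.gcd id ∣ m := Finset.gcd_dvd hmA
    have hg3 : A.gcd id ∣ 1 := by
      have he : m - (4 * n + 1) * d = 1 := by rw [hm]; ring
      exact he ▸ dvd_sub hg2 (hg1.mul_left _)
    rcases Int.isUnit_iff.mp (isUnit_of_dvd_one hg3) with h | h
    · exact h
    · exfalso
      have hnorm := Finset.normalize_gcd (s := A) (f := id)
      rw [h] at hnorm
      rw [show normalize (-1 : ℤ) = 1 from by decide] at hnorm
      omega
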